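/- Let P be a poset, S a down-set of P, and 𝒱 a cover of S by down-sets. Let 𝒥 be the category with objects the pairs (V, p) with V ∈ 𝒱 and p ∈ V, and a unique morphism (V,p) → (W,q) iff V ⊆ W and p ≤ q, and let π₁ : 𝒥 → 𝒱 be the projection (V,p) ↦ V. For every V ∈ 𝒱, the functor j_V : P_V → (π₁ ↓ V) sending q ∈ V to the object (V, q) with the identity morphism π₁(V,q) = V → V is a final (cofinal) functor: for every object x of (π₁ ↓ V), the comma category (x ↓ j_V) is nonempty and connected. -/
import Mathlib


/-!
For a cover `𝒱` of a down-set `S` by down-sets, and the category `𝒥` of pairs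
`(V, p)` with `V ∈ 𝒱`, `p ∈ V` (with a unique morphism `(V,p) → (W,q)` iff
`V ⊆ W` and `p ≤ q`) with projection `π₁ : 𝒥 ⥤ 𝒱`, the functor
`j_V : P_V ⥤ (π₁ ↓ V)`, `q ↦ ((V, q), id_V)`, is final (cofinal).
-/

open CategoryTheory

universe v

variable {P : Type v} [PartialOrder P]

/-- The indexing category `𝒥`: pairs `(V, p)` with `V ∈ 𝒱` and `p ∈ V`, with a
unique morphism `(V, p) → (W, q)` iff `V ⊆ W` and `p ≤ q`. -/
def CoverPairs (𝒱 : Set (LowerSet P)) : Type v :=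
  {x : ↥𝒱 × P // x.2 ∈ (x.1 : LowerSet P)}

instance (𝒱 : Set (LowerSet P)) : PartialOrder (CoverPairs 𝒱) :=
  inferInstanceAs (PartialOrder {x : ↥𝒱 × P // x.2 ∈ (x.1 : LowerSet P)})

/-- The projection `π₁ : 𝒥 ⥤ 𝒱`, `(V, p) ↦ V`, where `𝒱` is ordered by
inclusion. -/
def pi1 (𝒱 : Set (LowerSet P)) : CoverPairs 𝒱 ⥤ ↥𝒱 :=
  Monotone.functor (f := fun x => x.1.1) (fun _ _ h => h.1)

/-- The functor `j_V : P_V ⥤ (π₁ ↓ V)` sending `q ∈ V` to the object `(V, q)`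
equipped with the identity morphism `π₁(V, q) = V → V`. -/
def jFunctor (𝒱 : Set (LowerSet P)) (V : LowerSet P) (hV : V ∈ 𝒱) :
    ↥V ⥤ CostructuredArrow (pi1 𝒱) ⟨V, hV⟩ where
  obj q := CostructuredArrow.mk
    (Y := (⟨(⟨V, hV⟩, q.1), q.2⟩ : CoverPairs 𝒱)) (𝟙 (⟨V, hV⟩ : ↥𝒱))
  map {q r} f := CostructuredArrow.homMk
    (homOfLE (show ((⟨(⟨V, hV⟩, q.1), q.2⟩ : CoverPairs 𝒱) ≤ ⟨(⟨V, hV⟩, r.1), r.2⟩)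
      from ⟨le_refl _, leOfHom f⟩))
    (Subsingleton.elim _ _)

/-- **`j_V` is final.**  Let `S` be a down-set of a poset `P` and let `𝒱` be a
cover of `S` by down-sets.  For every `V ∈ 𝒱`, the functor
`j_V : P_V ⥤ (π₁ ↓ V)` is final (cofinal): for every object `x` of `(π₁ ↓ V)`
the comma category `(x ↓ j_V)` is nonempty and connected. -/
theorem jFunctor_final (S : LowerSet P) (𝒱 : Set (LowerSet P))
    (hcover : (⋃ V ∈ 𝒱, (V : Set P)) = (S : Set P))
    (V : LowerSet P) (hV : V ∈ 𝒱) :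
    (jFunctor 𝒱 V hV).Final := by
  constructor
  intro x
  -- x : CostructuredArrow (pi1 𝒱) ⟨V, hV⟩
  obtain ⟨⟨⟨W, p⟩, hp⟩, _, f⟩ := x
  have hWV : (W : LowerSet P) ≤ V := leOfHom f
  have hpV : p ∈ V := hWV hp
  set x₀ : CostructuredArrow (pi1 𝒱) ⟨V, hV⟩ :=
    CostructuredArrow.mk (Y := (⟨(W, p), hp⟩ : CoverPairs 𝒱)) f with hx₀
  let base : StructuredArrow x₀ (jFunctor 𝒱 V hV) :=
    StructuredArrow.mk (Y := (⟨p, hpV⟩ : ↥V))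
      (CostructuredArrow.homMk (homOfLE ⟨hWV, le_refl p⟩) (Subsingleton.elim _ _))
  show IsConnected (StructuredArrow x₀ (jFunctor 𝒱 V hV))
  have key : ∀ y : StructuredArrow x₀ (jFunctor 𝒱 V hV), Nonempty (base ⟶ y) := by
    intro y
    have hpy : p ≤ (y.right : P) := (leOfHom y.hom.left).2
    refine ⟨StructuredArrow.homMk (homOfLE hpy) ?_⟩
    apply CostructuredArrow.hom_ext
    apply Subsingleton.elim
  have : Nonempty (StructuredArrow x₀ (jFunctor 𝒱 V hV)) := ⟨base⟩
  apply zigzag_isConnected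
  intro y z
  exact Relation.ReflTransGen.tail
    (Relation.ReflTransGen.single (Or.inr (key y))) (Or.inl (key z))
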